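/- Let C_n be the cycle of even length n > 3 with edge ideal I. Then the minimal generators of the (n/2 - 1)-st squarefree power I^{[n/2-1]} are exactly the monomials (x_1 x_2 ... x_n)/(x_r x_s) with 1 <= r < s <= n and s - r odd. -/

import Mathlib

open MvPolynomial

noncomputable section

abbrev SRing (K : Type) [Field K] (n : ℕ) := MvPolynomial (Fin n) K

/-- total degree of an exponent vector -/
def mdeg {n : ℕ} (e : Fin n →₀ ℕ) : ℕ := e.sum fun _ v => v

/-- minimal monomial generators of a monomial ideal, as exponent vectors:
monomials in `J` none of whose proper divisors lies in `J` -/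
def minGen {K : Type} [Field K] {n : ℕ} (J : Ideal (SRing K n)) : Set (Fin n →₀ ℕ) :=
  {e | (monomial e (1:K)) ∈ J ∧
    ∀ e' : Fin n →₀ ℕ, e' ≤ e → e' ≠ e → (monomial e' (1:K)) ∉ J}

/-- adjacency in the graph `G_J^{(u,v)}` : vertices are the minimal generators of `J`
dividing `lcm(u,v)`, with an edge between two of them iff their lcm has degree `d+1` -/
def lcmGraphAdj {K : Type} [Field K] {n : ℕ} (J : Ideal (SRing K n)) (d : ℕ)
    (u v : Fin n →₀ ℕ) (w w' : Fin n →₀ ℕ) : Prop :=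
  w ∈ minGen J ∧ w' ∈ minGen J ∧ w ≤ u ⊔ v ∧ w' ≤ u ⊔ v ∧ mdeg (w ⊔ w') = d + 1

/-- a graded partial free resolution of the ideal `I`, exact at homological positions `< r`:
`F_i` is free with basis in (internal) degrees `dg i`, the maps are graded of degree `0`,
`F_0` surjects onto `I`, and the sequence is exact at `F_i` for `i < r`. -/
structure GradedPartialRes {K : Type} [Field K] {n : ℕ} (I : Ideal (SRing K n)) (r : ℕ∞) where
  s : ℕ → ℕ
  dg : ∀ i, Fin (s i) → ℕ
  aug : (Fin (s 0) →₀ SRing K n) →ₗ[SRing K n] SRing K n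
  diff : ∀ i, (Fin (s (i+1)) →₀ SRing K n) →ₗ[SRing K n] (Fin (s i) →₀ SRing K n)
  aug_hom : ∀ k, (aug (Finsupp.single k 1)).IsHomogeneous (dg 0 k)
  diff_hom : ∀ i k l, (diff i (Finsupp.single k 1)) l = 0 ∨
      ∃ m, ((diff i (Finsupp.single k 1)) l).IsHomogeneous m ∧ dg i l + m = dg (i+1) k
  aug_range : LinearMap.range aug = I
  exact_zero : (0 : ℕ∞) < r → LinearMap.range (diff 0) = LinearMap.ker aug
  exact_succ : ∀ i : ℕ, ((i : ℕ∞) + 1) < r →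
      LinearMap.range (diff (i+1)) = LinearMap.ker (diff i)

/-- the graded Betti number `β_{i,j}(I)`: the minimal number of degree-`j` basis elements
in homological position `i`, over all graded partial resolutions of `I` exact at
positions `0, …, i` (the minimum is attained by the minimal graded free resolution). -/
def gradedBetti {K : Type} [Field K] {n : ℕ} (I : Ideal (SRing K n)) (i j : ℕ) : ℕ∞ :=
  ⨅ R : GradedPartialRes I ((i : ℕ∞)+1),
    ((Finset.univ.filter fun k => R.dg i k = j).card : ℕ∞)

/-- `I` (generated in degree `d`) is `r` steps linear: `β_{i,i+j}(I) = 0` for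
all `i ≤ r` and `j > d` -/
def stepsLinear {K : Type} [Field K] {n : ℕ} (I : Ideal (SRing K n)) (d r : ℕ) : Prop :=
  ∀ i ≤ r, ∀ j, d < j → gradedBetti I i (i+j) = 0

/-- `index(I) = sup{r : I is r steps linear} + 1` -/
def idealIndex {K : Type} [Field K] {n : ℕ} (I : Ideal (SRing K n)) (d : ℕ) : ℕ∞ :=
  sSup {x : ℕ∞ | ∃ r : ℕ, x = (r : ℕ∞) + 1 ∧ stepsLinear I d r}

/-- `I` is linearly related: all first syzygies are linear, i.e. `index(I) > 1` -/
def LinearlyRelated {K : Type} [Field K] {n : ℕ} (I : Ideal (SRing K n)) (d : ℕ) : Prop :=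
  stepsLinear I d 1

/-- projective dimension of `I`: the minimal length of a graded free resolution of `I` -/
def projDim {K : Type} [Field K] {n : ℕ} (I : Ideal (SRing K n)) : ℕ∞ :=
  sInf {x : ℕ∞ | ∃ m : ℕ, x = (m : ℕ∞) ∧
    ∃ R : GradedPartialRes I ⊤, ∀ i : ℕ, m < i → R.s i = 0}

/-- the edge ideal of the graph (possibly with loops) given by a symmetric relation `E`:
generated by the monomials `X i * X j` with `E i j` -/
def edgeIdeal (K : Type) [Field K] {n : ℕ} (E : Fin n → Fin n → Prop) : Ideal (SRing K n) :=
  Ideal.span {p | ∃ i j, E i j ∧ p = X i * X j}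

/-- `E` is gap free: for any two disjoint edges there is an edge meeting both -/
def GapFree {n : ℕ} (E : Fin n → Fin n → Prop) : Prop :=
  ∀ i i' j j', E i i' → E j j' → i ≠ j → i ≠ j' → i' ≠ j → i' ≠ j' →
    ∃ a b, E a b ∧ (a = i ∨ a = i') ∧ (b = j ∨ b = j')

/-- a matching of a simple graph, recorded as a finite set of ordered pairs `(i,j)` with
`i < j`: edges of `G` that are pairwise disjoint -/
def IsMatching {n : ℕ} (G : SimpleGraph (Fin n)) (M : Finset (Fin n × Fin n)) : Prop :=
  (∀ p ∈ M, G.Adj p.1 p.2 ∧ p.1 < p.2) ∧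
  ∀ p ∈ M, ∀ q ∈ M, p ≠ q →
    p.1 ≠ q.1 ∧ p.1 ≠ q.2 ∧ p.2 ≠ q.1 ∧ p.2 ≠ q.2

/-- the matching number `ν(G)` -/
def matchNum {n : ℕ} (G : SimpleGraph (Fin n)) : ℕ :=
  sSup {k | ∃ M, IsMatching G M ∧ M.card = k}

/-- the edge `e` meets the edge `f` (as unordered pairs of vertices) -/
def meets {n : ℕ} (e f : Fin n × Fin n) : Prop :=
  e.1 = f.1 ∨ e.1 = f.2 ∨ e.2 = f.1 ∨ e.2 = f.2

/-- two (disjoint) edges form a gap in `G`: no edge of `G` meets both -/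
def FormsGap {n : ℕ} (G : SimpleGraph (Fin n)) (e e' : Fin n × Fin n) : Prop :=
  ¬ ∃ a b, G.Adj a b ∧ meets (a, b) e ∧ meets (a, b) e'

/-- a restricted matching: a matching one of whose edges forms a gap with
every other edge of the matching -/
def IsRestrictedMatching {n : ℕ} (G : SimpleGraph (Fin n)) (M : Finset (Fin n × Fin n)) : Prop :=
  IsMatching G M ∧ ∃ e ∈ M, ∀ e' ∈ M, e' ≠ e → FormsGap G e e'

/-- `ν₀(G)`: maximal size of a restricted matching, set to `1` if there is none -/
def resMatchNum {n : ℕ} (G : SimpleGraph (Fin n)) : ℕ :=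
  max (sSup {k | ∃ M, IsRestrictedMatching G M ∧ M.card = k}) 1

/-- the `k`-th squarefree power `I(G)^{[k]}`: generated by the products of the
edges of the matchings of `G` of size `k` -/
def sqfreePower (K : Type) [Field K] {n : ℕ} (G : SimpleGraph (Fin n)) (k : ℕ) :
    Ideal (SRing K n) :=
  Ideal.span {p | ∃ M : Finset (Fin n × Fin n), IsMatching G M ∧ M.card = k ∧
    p = ∏ q ∈ M, (X q.1 * X q.2)}

/-- a monomial ideal has linear quotients: for some ordering `u_1, …, u_t` of its minimal
monomial generators, each colon ideal `(u_1, …, u_{i-1}) : u_i` is generated by variables -/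
def HasLinearQuotients {K : Type} [Field K] {n : ℕ} (J : Ideal (SRing K n)) : Prop :=
  ∃ (t : ℕ) (u : Fin t → (Fin n →₀ ℕ)), Function.Injective u ∧
    (∀ e, e ∈ minGen J ↔ ∃ i, u i = e) ∧
    ∀ i : Fin t, ∃ V : Set (Fin n),
      Submodule.colon (Ideal.span ((fun j => (monomial (u j) (1:K))) '' {j | j < i}))
        (Ideal.span {monomial (u i) (1:K)}) =
      Ideal.span ((fun v => (X v : SRing K n)) '' V)

/-- the cycle graph of length `n` on `Fin n`: edges `{i, i+1}` and `{0, n-1}` -/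
def cycleG (n : ℕ) : SimpleGraph (Fin n) where
  Adj i j := i ≠ j ∧ ((i:ℕ)+1 = j ∨ (j:ℕ)+1 = i ∨ ((i:ℕ) = 0 ∧ (j:ℕ) = n-1) ∨
    ((j:ℕ) = 0 ∧ (i:ℕ) = n-1))
  symm := by
    constructor
    intro i j h
    exact ⟨h.1.symm, by tauto⟩
  loopless := by constructor; intro i h; exact h.1 rfl

namespace Stmt16aux

def EM {n : ℕ} (M : Finset (Fin n × Fin n)) : Fin n →₀ ℕ :=
  ∑ q ∈ M, (Finsupp.single q.1 1 + Finsupp.single q.2 1)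

lemma EM_apply {n : ℕ} (M : Finset (Fin n × Fin n)) (t : Fin n) :
    EM M t = ∑ q ∈ M, ((if q.1 = t then 1 else 0) + (if q.2 = t then 1 else 0)) := by
  classical
  rw [EM, Finset.sum_apply']
  refine Finset.sum_congr rfl fun q _ => ?_
  simp [Finsupp.single_apply]

lemma prod_eq (K : Type) [Field K] {n : ℕ} (M : Finset (Fin n × Fin n)) :
    ∏ q ∈ M, (X q.1 * X q.2 : SRing K n) = monomial (EM M) 1 := by
  classical
  induction M using Finset.induction with
  | empty => simp [EM]
  | @insert a M ha ih =>
    have h : EM (insert a M) = (Finsupp.single a.1 1 + Finsupp.single a.2 1) + EM M :=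
      Finset.sum_insert ha
    rw [Finset.prod_insert ha, ih, h]
    rw [X, X, monomial_mul, monomial_mul, one_mul, add_assoc, one_mul]

lemma mem_sq_iff {K : Type} [Field K] {n : ℕ} (G : SimpleGraph (Fin n)) (k : ℕ)
    (e : Fin n →₀ ℕ) :
    (monomial e (1:K)) ∈ sqfreePower K G k ↔
      ∃ M, IsMatching G M ∧ M.card = k ∧ EM M ≤ e := by
  classical
  have hset : {p | ∃ M : Finset (Fin n × Fin n), IsMatching G M ∧ M.card = k ∧
      p = ∏ q ∈ M, (X q.1 * X q.2 : SRing K n)}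
      = (fun d => monomial d (1:K)) '' {d | ∃ M, IsMatching G M ∧ M.card = k ∧ d = EM M} := by
    ext p
    simp only [Set.mem_setOf_eq, Set.mem_image]
    constructor
    · rintro ⟨M, h1, h2, rfl⟩
      exact ⟨EM M, ⟨M, h1, h2, rfl⟩, (prod_eq K M).symm⟩
    · rintro ⟨d, ⟨M, h1, h2, rfl⟩, rfl⟩
      exact ⟨M, h1, h2, (prod_eq K M).symm⟩
  rw [sqfreePower, hset, mem_ideal_span_monomial_image]
  simp only [support_monomial, if_neg (one_ne_zero : (1:K) ≠ 0), Finset.mem_singleton,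
    Set.mem_setOf_eq]
  constructor
  · intro h
    obtain ⟨d, ⟨M, h1, h2, rfl⟩, hle⟩ := h e rfl
    exact ⟨M, h1, h2, hle⟩
  · rintro ⟨M, h1, h2, hle⟩ xi rfl
    exact ⟨EM M, ⟨M, h1, h2, rfl⟩, hle⟩


lemma touch_unique {n : ℕ} {G : SimpleGraph (Fin n)} {M : Finset (Fin n × Fin n)}
    (hM : IsMatching G M) {q q' : Fin n × Fin n} (hq : q ∈ M) (hq' : q' ∈ M)
    {t : Fin n} (h1 : q.1 = t ∨ q.2 = t) (h2 : q'.1 = t ∨ q'.2 = t) : q = q' := by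
  by_contra hne
  obtain ⟨a, b, c, d⟩ := hM.2 q hq q' hq' hne
  rcases h1 with h | h <;> rcases h2 with h' | h' <;> simp_all

lemma EM_eq {n : ℕ} {G : SimpleGraph (Fin n)} {M : Finset (Fin n × Fin n)}
    (hM : IsMatching G M) (t : Fin n) :
    EM M t = if ∃ q ∈ M, q.1 = t ∨ q.2 = t then 1 else 0 := by
  classical
  rw [EM_apply]
  split_ifs with h
  · obtain ⟨q, hq, hqt⟩ := h
    rw [Finset.sum_eq_single_of_mem q hq]
    · have hlt := (hM.1 q hq).2
      rcases hqt with h | h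
      · have h2 : q.2 ≠ t := fun hh => absurd (hh.trans h.symm) (ne_of_gt hlt)
        simp [h, h2]
      · have h2 : q.1 ≠ t := fun hh => absurd (hh.trans h.symm) (ne_of_lt hlt)
        simp [h, h2]
    · intro q' hq' hne
      have h1 : q'.1 ≠ t := fun hh => hne (touch_unique hM hq' hq (Or.inl hh) hqt)
      have h2 : q'.2 ≠ t := fun hh => hne (touch_unique hM hq' hq (Or.inr hh) hqt)
      simp [h1, h2]
  · push_neg at h
    apply Finset.sum_eq_zero
    intro q hq
    have := h q hq
    simp [this.1, this.2]

lemma sum_EM {n : ℕ} (M : Finset (Fin n × Fin n)) :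
    ∑ t : Fin n, EM M t = 2 * M.card := by
  classical
  simp only [EM_apply]
  rw [Finset.sum_comm]
  have : ∀ q : Fin n × Fin n, q ∈ M →
      (∑ t : Fin n, ((if q.1 = t then 1 else 0) + (if q.2 = t then 1 else 0))) = 2 := by
    intro q _
    rw [Finset.sum_add_distrib, Finset.sum_ite_eq, Finset.sum_ite_eq]
    simp
  rw [Finset.sum_congr rfl this, Finset.sum_const, smul_eq_mul, mul_comm]

lemma sum_mul_EM {n : ℕ} (M : Finset (Fin n × Fin n)) :
    ∑ t : Fin n, (t : ℕ) * EM M t = ∑ q ∈ M, ((q.1 : ℕ) + (q.2 : ℕ)) := by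
  classical
  simp only [EM_apply, Finset.mul_sum]
  rw [Finset.sum_comm]
  refine Finset.sum_congr rfl fun q _ => ?_
  have : ∀ t : Fin n,
      (t : ℕ) * ((if q.1 = t then 1 else 0) + (if q.2 = t then 1 else 0)) =
      (if q.1 = t then (t:ℕ) else 0) + (if q.2 = t then (t:ℕ) else 0) := by
    intro t; split_ifs <;> ring
  rw [Finset.sum_congr rfl fun t _ => this t, Finset.sum_add_distrib,
    Finset.sum_ite_eq, Finset.sum_ite_eq]
  simp

lemma sum_ind {n : ℕ} (r s : Fin n) (hne : r ≠ s) :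
    ∑ t : Fin n, (if t = r ∨ t = s then 0 else 1) = n - 2 := by
  classical
  rw [Finset.sum_ite, Finset.sum_const, Finset.sum_const]
  have h1 : Finset.univ.filter (fun t : Fin n => t = r ∨ t = s) = {r, s} := by
    ext t; simp [Finset.mem_insert]
  have h2 := Finset.card_filter_add_card_filter_not
    (s := (Finset.univ : Finset (Fin n))) (fun t : Fin n => t = r ∨ t = s)
  rw [h1] at h2
  rw [Finset.card_pair hne] at h2
  simp only [Finset.card_univ, Fintype.card_fin] at h2
  simp only [smul_eq_mul, mul_zero, mul_one, zero_add]
  omega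


lemma dirA {n : ℕ} (hn : 3 < n) (hev : Even n) (M : Finset (Fin n × Fin n))
    (hM : IsMatching (cycleG n) M) (hc : M.card = n / 2 - 1) :
    ∃ r s : Fin n, r < s ∧ ((s:ℕ) - (r:ℕ)) % 2 = 1 ∧
      ∀ t, EM M t = if t = r ∨ t = s then 0 else 1 := by
  classical
  obtain ⟨m, hm⟩ := hev
  have hm2 : 2 ≤ m := by omega
  set C : Fin n → Prop := fun t => ∃ q ∈ M, q.1 = t ∨ q.2 = t with hC
  -- counting covered vertices
  have hsum : ∑ t : Fin n, EM M t = 2 * M.card := sum_EM M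
  have hsum2 : ∑ t : Fin n, EM M t = (Finset.univ.filter C).card := by
    rw [Finset.sum_congr rfl fun t _ => EM_eq hM t, Finset.sum_ite, Finset.sum_const,
      Finset.sum_const, smul_eq_mul, smul_eq_mul, mul_one, mul_zero, add_zero]
  have hcards := Finset.card_filter_add_card_filter_not
    (s := (Finset.univ : Finset (Fin n))) C
  simp only [Finset.card_univ, Fintype.card_fin] at hcards
  have hU : (Finset.univ.filter (fun t => ¬ C t)).card = 2 := by omega
  obtain ⟨r, s, hrs0, hU2⟩ := Finset.card_eq_two.mp hU
  -- wlog r < s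
  wlog hlt : (r:ℕ) < (s:ℕ) generalizing r s
  · refine this s r hrs0.symm ?_ ?_
    · rw [hU2]; exact Finset.pair_comm r s
    · have : (r:ℕ) ≠ (s:ℕ) := fun h => hrs0 (Fin.ext h)
      omega
  have hmemU : ∀ t : Fin n, ¬ C t ↔ (t = r ∨ t = s) := by
    intro t
    constructor
    · intro h
      have : t ∈ Finset.univ.filter (fun t => ¬ C t) := by
        simp only [Finset.mem_filter, Finset.mem_univ, true_and]; exact h
      rw [hU2] at this
      simpa using this
    · intro h
      have : t ∈ Finset.univ.filter (fun t => ¬ C t) := by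
        rw [hU2]; simpa using h
      simp only [Finset.mem_filter] at this
      exact this.2
  have hAll : ∀ t, EM M t = if t = r ∨ t = s then 0 else 1 := by
    intro t
    rw [EM_eq hM t]
    by_cases h : t = r ∨ t = s
    · rw [if_pos h, if_neg ((hmemU t).mpr h)]
    · rw [if_neg h]
      by_cases h2 : C t
      · rw [if_pos h2]
      · exact absurd ((hmemU t).mp h2) h
  refine ⟨r, s, hlt, ?_, hAll⟩
  -- parity
  have hedge : ∀ q ∈ M, ((q.1:ℕ) + (q.2:ℕ)) % 2 = 1 := by
    intro q hq
    have hadj := (hM.1 q hq).1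
    obtain ⟨hne, hcase⟩ := hadj
    have h1 := q.1.isLt
    have h2 := q.2.isLt
    omega
  have hS1 : (∑ q ∈ M, ((q.1:ℕ) + (q.2:ℕ))) % 2 = M.card % 2 := by
    rw [Finset.sum_nat_mod, Finset.sum_congr rfl hedge, Finset.sum_const, smul_eq_mul,
      mul_one]
  have hT2 : (∑ t : Fin n, (t:ℕ)) * 2 = n * (n - 1) := by
    rw [Fin.sum_univ_eq_sum_range (fun i => i) n]
    exact Finset.sum_range_id_mul_two n
  have hTmod : (∑ t : Fin n, (t:ℕ)) % 2 = m % 2 := by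
    obtain ⟨k, hk⟩ : ∃ k, m + m - 1 = k := ⟨_, rfl⟩
    have h : (∑ t : Fin n, (t:ℕ)) * 2 = m * k * 2 := by
      rw [hT2, show n - 1 = k by omega, hm]
      ring
    have h3 : (∑ t : Fin n, (t:ℕ)) = m * k :=
      Nat.eq_of_mul_eq_mul_right (show 0 < 2 by norm_num) h
    have h4 : k % 2 = 1 := by omega
    rw [h3, Nat.mul_mod, h4, mul_one]
    omega
  -- split the indicator sum
  have hsplit : (∑ t : Fin n, (t:ℕ) * EM M t) + ((r:ℕ) + (s:ℕ)) = ∑ t : Fin n, (t:ℕ) := by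
    have h0 : ∀ t : Fin n, (t:ℕ) * EM M t = if t = r ∨ t = s then 0 else (t:ℕ) := by
      intro t; rw [hAll t]; split_ifs <;> simp
    rw [Finset.sum_congr rfl fun t _ => h0 t]
    rw [Finset.sum_ite, Finset.sum_const, smul_eq_mul, mul_zero, zero_add]
    have h1 : Finset.univ.filter (fun t : Fin n => t = r ∨ t = s) = {r, s} := by
      ext t; simp
    have h2 := Finset.sum_filter_add_sum_filter_not (Finset.univ : Finset (Fin n))
      (fun t : Fin n => t = r ∨ t = s) (fun t : Fin n => (t:ℕ))
    rw [h1, Finset.sum_pair hrs0] at h2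
    omega
  have hfinal := sum_mul_EM M
  have hrsne : (r:ℕ) ≠ (s:ℕ) := by omega
  omega


lemma dirB {n : ℕ} (hn : 3 < n) (hev : Even n) (r s : Fin n) (hrs : r < s)
    (hpar : ((s:ℕ) - (r:ℕ)) % 2 = 1) :
    ∃ M, IsMatching (cycleG n) M ∧ M.card = n / 2 - 1 ∧
      ∀ t, EM M t = if t = r ∨ t = s then 0 else 1 := by
  classical
  have hnev : n % 2 = 0 := Nat.even_iff.mp hev
  have hrv : (r:ℕ) < (s:ℕ) := hrs
  have hsn := s.isLt
  have hrn := r.isLt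
  set P : Fin n × Fin n → Prop := fun p =>
    ((p.2:ℕ) = (p.1:ℕ) + 1 ∧
      (((r:ℕ) < (p.1:ℕ) ∧ (p.2:ℕ) < (s:ℕ) ∧ ((p.1:ℕ) + (r:ℕ)) % 2 = 1) ∨
       (((p.2:ℕ) < (r:ℕ) ∨ (s:ℕ) < (p.1:ℕ)) ∧ ((p.1:ℕ) + (s:ℕ)) % 2 = 1)))
    ∨ ((p.1:ℕ) = 0 ∧ (p.2:ℕ) = n - 1 ∧ (s:ℕ) % 2 = 0) with hP
  set M : Finset (Fin n × Fin n) := Finset.univ.filter P with hMdef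
  have hmem : ∀ p : Fin n × Fin n, p ∈ M ↔ P p := by
    intro p; rw [hMdef, Finset.mem_filter]; simp
  -- matching
  have hmatch : IsMatching (cycleG n) M := by
    constructor
    · intro p hp
      have hp' := (hmem p).mp hp
      rw [hP] at hp'
      have h1 := p.1.isLt
      have h2 := p.2.isLt
      have hne : p.1 ≠ p.2 := by
        intro h
        have : (p.1:ℕ) = (p.2:ℕ) := congrArg Fin.val h
        omega
      constructor
      · exact ⟨hne, by omega⟩
      · have : (p.1:ℕ) < (p.2:ℕ) := by omega
        exact this
    · intro p hp q hq hne
      have hp' := (hmem p).mp hp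
      have hq' := (hmem q).mp hq
      rw [hP] at hp' hq'
      have hne' : ¬((p.1:ℕ) = (q.1:ℕ) ∧ (p.2:ℕ) = (q.2:ℕ)) := by
        rintro ⟨h1, h2⟩
        exact hne (Prod.ext (Fin.ext h1) (Fin.ext h2))
      have e1 := p.1.isLt
      have e2 := p.2.isLt
      have e3 := q.1.isLt
      have e4 := q.2.isLt
      have key : (p.1:ℕ) ≠ (q.1:ℕ) ∧ (p.1:ℕ) ≠ (q.2:ℕ) ∧ (p.2:ℕ) ≠ (q.1:ℕ) ∧
          (p.2:ℕ) ≠ (q.2:ℕ) := by omega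
      exact ⟨fun h => key.1 (congrArg Fin.val h), fun h => key.2.1 (congrArg Fin.val h),
        fun h => key.2.2.1 (congrArg Fin.val h), fun h => key.2.2.2 (congrArg Fin.val h)⟩
  -- coverage
  have hAll : ∀ t, EM M t = if t = r ∨ t = s then 0 else 1 := by
    intro t
    rw [EM_eq hmatch t]
    by_cases h : t = r ∨ t = s
    · rw [if_pos h, if_neg]
      rintro ⟨q, hq, hqt⟩
      have hq' := (hmem q).mp hq
      rw [hP] at hq'
      have e3 := q.1.isLt
      have e4 := q.2.isLt
      have hv : (q.1:ℕ) = (t:ℕ) ∨ (q.2:ℕ) = (t:ℕ) := by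
        rcases hqt with h' | h'
        · exact Or.inl (congrArg Fin.val h')
        · exact Or.inr (congrArg Fin.val h')
      have hteq : (t:ℕ) = (r:ℕ) ∨ (t:ℕ) = (s:ℕ) := by
        rcases h with h' | h'
        · exact Or.inl (congrArg Fin.val h')
        · exact Or.inr (congrArg Fin.val h')
      omega
    · rw [if_neg h, if_pos]
      have htr : (t:ℕ) ≠ (r:ℕ) := fun hh => h (Or.inl (Fin.ext hh))
      have hts : (t:ℕ) ≠ (s:ℕ) := fun hh => h (Or.inr (Fin.ext hh))
      have htn := t.isLt
      by_cases h1 : (r:ℕ) < (t:ℕ) ∧ (t:ℕ) < (s:ℕ)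
      · by_cases h2 : ((t:ℕ) + (r:ℕ)) % 2 = 1
        · refine ⟨(t, ⟨(t:ℕ)+1, by omega⟩), (hmem _).mpr ?_, Or.inl rfl⟩
          rw [hP]; dsimp only; omega
        · refine ⟨(⟨(t:ℕ)-1, by omega⟩, t), (hmem _).mpr ?_, Or.inr rfl⟩
          rw [hP]; dsimp only; omega
      · -- t in outer arc : t < r or s < t
        have hreg : (t:ℕ) < (r:ℕ) ∨ (s:ℕ) < (t:ℕ) := by omega
        by_cases h2 : ((t:ℕ) + (s:ℕ)) % 2 = 1
        · by_cases h3 : (t:ℕ) < n - 1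
          · refine ⟨(t, ⟨(t:ℕ)+1, by omega⟩), (hmem _).mpr ?_, Or.inl rfl⟩
            rw [hP]; dsimp only; omega
          · -- t = n - 1, wrap edge
            refine ⟨(⟨0, by omega⟩, t), (hmem _).mpr ?_, Or.inr rfl⟩
            rw [hP]; dsimp only; omega
        · by_cases h3 : 0 < (t:ℕ)
          · refine ⟨(⟨(t:ℕ)-1, by omega⟩, t), (hmem _).mpr ?_, Or.inr rfl⟩
            rw [hP]; dsimp only; omega
          · -- t = 0, wrap edge
            refine ⟨(t, ⟨n-1, by omega⟩), (hmem _).mpr ?_, Or.inl rfl⟩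
            rw [hP]; dsimp only; omega
  -- cardinality
  have hsum : ∑ t : Fin n, EM M t = 2 * M.card := sum_EM M
  have hsum2 : ∑ t : Fin n, EM M t = n - 2 := by
    rw [Finset.sum_congr rfl fun t _ => hAll t]
    exact sum_ind r s (ne_of_lt hrs)
  refine ⟨M, hmatch, by omega, hAll⟩

end Stmt16aux

/-- **Lemma.** For the even cycle `C_n` (`n > 3`), the minimal generators of the
squarefree power `I^{[n/2-1]}` are exactly the monomials `(x_0 ⋯ x_{n-1})/(x_r x_s)`
with `r < s` and `s - r` odd. -/
theorem stmt16 (K : Type) [Field K] (n : ℕ) (hn : 3 < n) (hev : Even n) :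
    ∀ e : Fin n →₀ ℕ,
      e ∈ minGen (sqfreePower K (cycleG n) (n / 2 - 1)) ↔
        ∃ r s : Fin n, r < s ∧ Odd ((s : ℕ) - (r : ℕ)) ∧
          ∀ t : Fin n, e t = if t = r ∨ t = s then 0 else 1 := by
  intro e
  constructor
  · rintro ⟨hmem, hmin⟩
    rw [Stmt16aux.mem_sq_iff] at hmem
    obtain ⟨M, hM, hc, hle⟩ := hmem
    obtain ⟨r, s, hrs, hpar, hAll⟩ := Stmt16aux.dirA hn hev M hM hc
    have heq : Stmt16aux.EM M = e := by
      by_contra hne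
      exact hmin (Stmt16aux.EM M) hle hne
        ((Stmt16aux.mem_sq_iff _ _ _).mpr ⟨M, hM, hc, le_refl _⟩)
    exact ⟨r, s, hrs, Nat.odd_iff.mpr hpar, fun t => by rw [← heq]; exact hAll t⟩
  · rintro ⟨r, s, hrs, hpar, hAll⟩
    have hrsne : r ≠ s := ne_of_lt hrs
    obtain ⟨M, h1, h2, h3⟩ := Stmt16aux.dirB hn hev r s hrs (Nat.odd_iff.mp hpar)
    refine ⟨?_, ?_⟩
    · rw [Stmt16aux.mem_sq_iff]
      exact ⟨M, h1, h2, Finsupp.le_def.mpr fun t => by rw [h3 t, hAll t]⟩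
    · intro e' hle' hne' hmem'
      rw [Stmt16aux.mem_sq_iff] at hmem'
      obtain ⟨M', hM', hc', hle''⟩ := hmem'
      obtain ⟨r', s', hrs', hpar', hAll'⟩ := Stmt16aux.dirA hn hev M' hM' hc'
      have hs1 : ∑ t : Fin n, Stmt16aux.EM M' t = n - 2 := by
        rw [Finset.sum_congr rfl fun t _ => hAll' t]
        exact Stmt16aux.sum_ind r' s' (ne_of_lt hrs')
      have hs2 : ∑ t : Fin n, e t = n - 2 := by
        rw [Finset.sum_congr rfl fun t (_ : t ∈ Finset.univ) => hAll t]
        exact Stmt16aux.sum_ind r s hrsne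
      have hs3 : ∑ t : Fin n, Stmt16aux.EM M' t ≤ ∑ t : Fin n, e' t :=
        Finset.sum_le_sum fun t _ => Finsupp.le_def.mp hle'' t
      have hs4 : ∑ t : Fin n, e' t < ∑ t : Fin n, e t := by
        refine Finset.sum_lt_sum (fun t _ => Finsupp.le_def.mp hle' t) ?_
        by_contra hcon
        push_neg at hcon
        apply hne'
        ext t
        have hc2 := hcon t (Finset.mem_univ t)
        have hc1 := Finsupp.le_def.mp hle' t
        omega
      omega

end
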